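/- Let g be a Lie algebra, ϖ : g → A(g*, g) a Lie algebra 1-cocycle, φ ∈ ⋀³g, and t ∈ A(g*, g). Define ϖ^t_x = ϖ_x + ad_x t + t ad*_x, and define the bilinear expression Q(ϖ)(x; ξ,η,ζ) = ⟨ξ⊗η⊗ζ, ad_x^{(3)}φ⟩ − Cyc_{(ξ,η,ζ)}⟨ξ, ϖ_{ϖ_x η} ζ⟩ with φ^t the twisted associator ⟨ξ⊗η⊗ζ, φ^t⟩ = ⟨ξ⊗η⊗ζ, φ⟩ + Cyc_{(ξ,η,ζ)}⟨ζ, [tξ, tη] + ϖ_{tξ} η⟩. Then for all x ∈ g and ξ, η, ζ ∈ g*: ⟨ξ⊗η⊗ζ, ad^{(3)}_x φ⟩ − Cyc ⟨ξ, ϖ_{ϖ_x η} ζ⟩ = ⟨ξ⊗η⊗ζ, ad^{(3)}_x φ^t⟩ − Cyc ⟨ξ, ϖ^t_{ϖ^t_x η} ζ⟩. -/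

import Mathlib

section

variable {K L : Type*} [Field K] [LieRing L] [LieAlgebra K L]

/-- Twisted cocycle `ϖ^t_x = ϖ_x + ad_x ∘ t + t ∘ ad*_x`. -/
def twC (ϖ : L → Module.Dual K L →ₗ[K] L) (t : Module.Dual K L →ₗ[K] L) :
    L → Module.Dual K L →ₗ[K] L :=
  fun x => ϖ x + LieAlgebra.ad K L x ∘ₗ t + t ∘ₗ (LieAlgebra.ad K L x).dualMap

/-- Twisted associator pairing
`⟨ξ⊗η⊗ζ, φ^t⟩ = ⟨ξ⊗η⊗ζ, φ⟩ + Cyc_{(ξ,η,ζ)} ⟨ζ, [tξ,tη] + ϖ_{tξ} η⟩`. -/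
def twA (ϖ : L → Module.Dual K L →ₗ[K] L)
    (Φ : Module.Dual K L → Module.Dual K L → Module.Dual K L → K)
    (t : Module.Dual K L →ₗ[K] L) :
    Module.Dual K L → Module.Dual K L → Module.Dual K L → K :=
  fun ξ η ζ =>
    Φ ξ η ζ + (ζ ⁅t ξ, t η⁆ + ζ (ϖ (t ξ) η))
      + (ξ ⁅t η, t ζ⁆ + ξ (ϖ (t η) ζ))
      + (η ⁅t ζ, t ξ⁆ + η (ϖ (t ζ) ξ))

/-- The quantity `⟨ξ⊗η⊗ζ, ad^{(3)}_x φ⟩ − Cyc_{(ξ,η,ζ)} ⟨ξ, ϖ_{ϖ_x η} ζ⟩` is invariant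
under twisting `(ϖ, φ) ↦ (ϖ^t, φ^t)`. -/
theorem stmt_7
    (ϖ : L →ₗ[K] Module.Dual K L →ₗ[K] L)
    (hcoc : ∀ x y : L, ϖ ⁅x, y⁆ =
      LieAlgebra.ad K L x ∘ₗ ϖ y + ϖ y ∘ₗ (LieAlgebra.ad K L x).dualMap
        - LieAlgebra.ad K L y ∘ₗ ϖ x - ϖ x ∘ₗ (LieAlgebra.ad K L y).dualMap)
    (hϖskew : ∀ (x : L) (ξ η : Module.Dual K L), ξ (ϖ x η) = - η (ϖ x ξ))
    (Φ : Module.Dual K L → Module.Dual K L → Module.Dual K L → K)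
    (hΦ1 : ∀ ξ η ζ, Φ ξ η ζ = - Φ η ξ ζ)
    (hΦ2 : ∀ ξ η ζ, Φ ξ η ζ = - Φ ξ ζ η)
    (t : Module.Dual K L →ₗ[K] L)
    (ht : ∀ ξ η : Module.Dual K L, ξ (t η) = - η (t ξ)) :
    ∀ (x : L) (ξ η ζ : Module.Dual K L),
      (Φ ((LieAlgebra.ad K L x).dualMap ξ) η ζ
        + Φ ξ ((LieAlgebra.ad K L x).dualMap η) ζ
        + Φ ξ η ((LieAlgebra.ad K L x).dualMap ζ))
      - (ξ (ϖ (ϖ x η) ζ) + η (ϖ (ϖ x ζ) ξ) + ζ (ϖ (ϖ x ξ) η))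
      =
      (twA (fun a => ϖ a) Φ t ((LieAlgebra.ad K L x).dualMap ξ) η ζ
        + twA (fun a => ϖ a) Φ t ξ ((LieAlgebra.ad K L x).dualMap η) ζ
        + twA (fun a => ϖ a) Φ t ξ η ((LieAlgebra.ad K L x).dualMap ζ))
      - (ξ (twC (fun a => ϖ a) t (twC (fun a => ϖ a) t x η) ζ)
          + η (twC (fun a => ϖ a) t (twC (fun a => ϖ a) t x ζ) ξ)
          + ζ (twC (fun a => ϖ a) t (twC (fun a => ϖ a) t x ξ) η)) := by
  intro x ξ η ζ
  have L1 : ∀ (α : Module.Dual K L) (u v : L), α ⁅u, v⁆ + α ⁅v, u⁆ = 0 := by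
    intro α u v
    rw [← lie_skew v u, map_neg]; ring
  have hT : ∀ (y : L) (α β : Module.Dual K L),
      α (t ((LieAlgebra.ad K L y).dualMap β)) = - β ⁅y, t α⁆ := by
    intro y α β
    have h := ht α ((LieAlgebra.ad K L y).dualMap β)
    simpa [LinearMap.dualMap_apply, LieAlgebra.ad_apply] using h
  have C : ∀ (α γ : Module.Dual K L) (b : L),
      α (ϖ ⁅x, b⁆ γ) = α ⁅x, ϖ b γ⁆ + α (ϖ b ((LieAlgebra.ad K L x).dualMap γ))
        + α ⁅ϖ x γ, b⁆ - α (ϖ x ((LieAlgebra.ad K L b).dualMap γ)) := by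
    intro α γ b
    have h := congrArg (fun f : Module.Dual K L →ₗ[K] L => α (f γ)) (hcoc x b)
    simpa [LinearMap.dualMap_apply, LieAlgebra.ad_apply, sub_eq_add_neg] using h
  have S : ∀ (α γ : Module.Dual K L) (b : L),
      α (ϖ x ((LieAlgebra.ad K L b).dualMap γ)) = - γ ⁅b, ϖ x α⁆ := by
    intro α γ b
    have h := hϖskew x α ((LieAlgebra.ad K L b).dualMap γ)
    simpa [LinearMap.dualMap_apply, LieAlgebra.ad_apply] using h
  have J : ∀ (α : Module.Dual K L) (u v : L),
      α ⁅x, ⁅u, v⁆⁆ = α ⁅⁅x, u⁆, v⁆ + α ⁅u, ⁅x, v⁆⁆ := by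
    intro α u v
    rw [leibniz_lie, map_add]
  have hD : ∀ (f g : L →ₗ[K] L) (β : Module.Dual K L),
      (f + g).dualMap β = f.dualMap β + g.dualMap β := by
    intro f g β
    ext v
    simp [LinearMap.dualMap_apply]
  simp only [twA, twC, LinearMap.add_apply, LinearMap.coe_comp, Function.comp_apply,
    map_add, LieAlgebra.ad_apply, LinearMap.dualMap_apply, lie_add, add_lie, hT,
    map_neg, neg_lie, lie_neg, map_sub, hD]
  linear_combination (norm := ring_nf)
    C ξ ζ (t η) + C η ξ (t ζ) + C ζ η (t ξ)
    - S ξ ζ (t η) - S η ξ (t ζ) - S ζ η (t ξ)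
    - J ξ (t η) (t ζ) - J η (t ζ) (t ξ) - J ζ (t ξ) (t η)
    - L1 ξ (t η) ⁅x, t ζ⁆ - L1 η (t ζ) ⁅x, t ξ⁆ - L1 ζ (t ξ) ⁅x, t η⁆
    - L1 η (t ζ) (t ((LieAlgebra.ad K L x).dualMap ξ))
    - L1 ζ (t ξ) (t ((LieAlgebra.ad K L x).dualMap η))
    - L1 ξ (t η) (t ((LieAlgebra.ad K L x).dualMap ζ))
    + L1 ξ (ϖ x η) (t ζ) + L1 η (ϖ x ζ) (t ξ) + L1 ζ (ϖ x ξ) (t η)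

end
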